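/- Every simple graph satisfying property P is a perfect graph. -/

import Mathlib

/-- Property `P` of the paper: for any two disjoint edges `(v1,w1)` and
`(v2,w2)` of `G`, if `(v2,v1)` is an edge then `(w2,v1)` or `(w2,w1)` is an
edge of `G`. -/
def SimpleGraph.PropertyP {V : Type*} (G : SimpleGraph V) : Prop :=
  ∀ ⦃v1 w1 v2 w2 : V⦄, G.Adj v1 w1 → G.Adj v2 w2 →
    v1 ≠ v2 → v1 ≠ w2 → w1 ≠ v2 → w1 ≠ w2 →
    G.Adj v2 v1 → (G.Adj w2 v1 ∨ G.Adj w2 w1)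

/-- The clique number of a simple graph. -/
noncomputable def SimpleGraph.cliqueNumber {V : Type*} (G : SimpleGraph V) : ℕ :=
  sSup {n : ℕ | ∃ s : Finset V, G.IsNClique n s}

/-- A finite simple graph is perfect if for every induced subgraph, the
chromatic number equals the clique number. -/
def SimpleGraph.IsPerfect {V : Type*} (G : SimpleGraph V) : Prop :=
  ∀ S : Set V, (G.induce S).chromaticNumber = ((G.induce S).cliqueNumber : ℕ∞)

open Finset

namespace PropP

variable {V : Type*} (G : SimpleGraph V)

/-- Every vertex connected to an endpoint of an edge is (equal or) adjacent to
one of the endpoints. -/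
lemma walk_adj (hP : G.PropertyP) :
    ∀ {c a : V}, G.Walk c a → ∀ {b : V}, G.Adj a b →
      c = a ∨ c = b ∨ G.Adj c a ∨ G.Adj c b := by
  intro c a w
  induction w with
  | nil => intro b _; exact Or.inl rfl
  | @cons c d a hcd p ih =>
    intro b hab
    by_cases hca : c = a
    · exact Or.inl hca
    by_cases hcb : c = b
    · exact Or.inr (Or.inl hcb)
    by_cases hda : d = a
    · exact Or.inr (Or.inr (Or.inl (hda ▸ hcd)))
    by_cases hdb : d = b
    · exact Or.inr (Or.inr (Or.inr (hdb ▸ hcd)))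
    rcases ih hab with h | h | h | h
    · exact absurd h hda
    · exact absurd h hdb
    · -- Adj d a; apply P with (v1,w1)=(a,b), (v2,w2)=(d,c)
      rcases hP hab hcd.symm (fun h' => hda h'.symm) (fun h' => hca h'.symm)
          (fun h' => hdb h'.symm) (fun h' => hcb h'.symm) h with h' | h'
      · exact Or.inr (Or.inr (Or.inl h'))
      · exact Or.inr (Or.inr (Or.inr h'))
    · -- Adj d b; apply P with (v1,w1)=(b,a), (v2,w2)=(d,c)
      rcases hP hab.symm hcd.symm (fun h' => hdb h'.symm) (fun h' => hcb h'.symm)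
          (fun h' => hda h'.symm) (fun h' => hca h'.symm) h with h' | h'
      · exact Or.inr (Or.inr (Or.inr h'))
      · exact Or.inr (Or.inr (Or.inl h'))

/-- Same non-adjacency class within a component. -/
def Rel (x y : V) : Prop := x = y ∨ (¬ G.Adj x y ∧ G.Reachable x y)

variable {G}

lemma Rel.refl {x : V} : Rel G x x := Or.inl (Eq.refl x)

lemma Rel.symm {x y : V} (h : Rel G x y) : Rel G y x := by
  rcases h with rfl | ⟨h1, h2⟩
  · exact Or.inl (Eq.refl _)
  · exact Or.inr ⟨fun h => h1 h.symm, h2.symm⟩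

lemma Rel.reachable {x y : V} (h : Rel G x y) : G.Reachable x y := by
  rcases h with rfl | ⟨_, h2⟩
  · rfl
  · exact h2

lemma Rel.not_adj {x y : V} (h : Rel G x y) : ¬ G.Adj x y := by
  rcases h with rfl | ⟨h1, _⟩
  · exact G.loopless.irrefl x
  · exact h1

lemma Rel.trans (hP : G.PropertyP) {x y z : V} (h1 : Rel G x y) (h2 : Rel G y z) :
    Rel G x z := by
  rcases h1 with rfl | ⟨hnxy, hrxy⟩
  · exact h2
  rcases h2 with rfl | ⟨hnyz, hryz⟩
  · exact Or.inr ⟨hnxy, hrxy⟩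
  by_cases hxz : x = z
  · exact Or.inl hxz
  refine Or.inr ⟨fun haxz => ?_, hrxy.trans hryz⟩
  rcases walk_adj G hP (hrxy.symm.some) haxz with h | h | h | h
  · exact absurd (show G.Adj y z by rw [h]; exact haxz) hnyz
  · exact absurd (show G.Adj x y by rw [h]; exact haxz) hnxy
  · exact hnxy h.symm
  · exact hnyz h

variable [Fintype V]

open Classical in
/-- The minimum label over the non-adjacency class of `v`. -/
noncomputable def mfun (G : SimpleGraph V) (v : V) : ℕ :=
  sInf {k : ℕ | ∃ u, Rel G v u ∧ ((Fintype.equivFin V) u : ℕ) = k}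

lemma m_exists (v : V) : ∃ u, Rel G v u ∧ ((Fintype.equivFin V) u : ℕ) = mfun G v := by
  have h : {k : ℕ | ∃ u, Rel G v u ∧ ((Fintype.equivFin V) u : ℕ) = k}.Nonempty :=
    ⟨((Fintype.equivFin V) v : ℕ), v, Or.inl rfl, rfl⟩
  exact Nat.sInf_mem h

lemma m_le {v u : V} (h : Rel G v u) : mfun G v ≤ ((Fintype.equivFin V) u : ℕ) :=
  Nat.sInf_le ⟨u, h, rfl⟩

lemma m_congr (hP : G.PropertyP) {v w : V} (h : Rel G v w) : mfun G v = mfun G w := by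
  unfold mfun
  congr 1
  ext k
  exact ⟨fun ⟨u, hu, hk⟩ => ⟨u, (h.symm).trans hP hu, hk⟩,
    fun ⟨u, hu, hk⟩ => ⟨u, h.trans hP hu, hk⟩⟩

lemma rel_of_m_eq (hP : G.PropertyP) {v w : V} (h : mfun G v = mfun G w) :
    Rel G v w := by
  obtain ⟨u, hu, hku⟩ := m_exists (G := G) v
  obtain ⟨u', hu', hku'⟩ := m_exists (G := G) w
  have : u = u' := by
    apply (Fintype.equivFin V).injective
    exact Fin.val_injective (by rw [hku, hku', h])
  subst this
  exact hu.trans hP hu'.symm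

open Classical in
/-- The labels of the non-adjacency classes in the component of `v`. -/
noncomputable def compD (G : SimpleGraph V) (v : V) : Finset ℕ :=
  (univ.filter (fun u => G.Reachable v u)).image (mfun G)

open Classical in
noncomputable def color (G : SimpleGraph V) (v : V) : ℕ :=
  ((compD G v).filter (· < mfun G v)).card

lemma m_mem_compD (v : V) : mfun G v ∈ compD G v := by
  classical
  exact mem_image.mpr ⟨v, by simp [SimpleGraph.Reachable.refl], rfl⟩

lemma compD_congr {v w : V} (h : G.Reachable v w) : compD G v = compD G w := by
  classical
  unfold compD
  congr 1
  ext u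
  simp only [mem_filter, mem_univ, true_and]
  exact ⟨fun h' => h.symm.trans h', fun h' => h.trans h'⟩

open Classical in
/-- The minimum-label representatives of classes with label at most `mfun G v`
in the component of `v` form a clique of size `color G v + 1`. -/
lemma exists_clique (hP : G.PropertyP) (v : V) :
    ∃ s : Finset V, G.IsClique s ∧ s.card = color G v + 1 := by
  refine ⟨univ.filter (fun u => G.Reachable v u ∧
      ((Fintype.equivFin V) u : ℕ) = mfun G u ∧ mfun G u ≤ mfun G v), ?_, ?_⟩
  · intro u hu w hw huw
    simp only [coe_filter, Set.mem_setOf_eq, mem_univ, true_and] at hu hw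
    by_contra hadj
    have hrel : Rel G u w := Or.inr ⟨hadj, hu.1.symm.trans hw.1⟩
    have : mfun G u = mfun G w := m_congr hP hrel
    exact huw ((Fintype.equivFin V).injective
      (Fin.val_injective (by rw [hu.2.1, hw.2.1, this])))
  · have hinj : Set.InjOn (mfun G) ↑(univ.filter (fun u => G.Reachable v u ∧
        ((Fintype.equivFin V) u : ℕ) = mfun G u ∧ mfun G u ≤ mfun G v)) := by
      intro u hu w hw h
      simp only [coe_filter, Set.mem_setOf_eq, mem_univ, true_and] at hu hw
      exact (Fintype.equivFin V).injective
        (Fin.val_injective (by rw [hu.2.1, hw.2.1, h]))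
    rw [← Finset.card_image_of_injOn hinj]
    have himg : (univ.filter (fun u => G.Reachable v u ∧
        ((Fintype.equivFin V) u : ℕ) = mfun G u ∧ mfun G u ≤ mfun G v)).image (mfun G)
        = (compD G v).filter (· ≤ mfun G v) := by
      ext k
      simp only [mem_image, mem_filter, mem_univ, true_and]
      constructor
      · rintro ⟨u, ⟨hru, _, hle⟩, rfl⟩
        exact ⟨mem_image.mpr ⟨u, by simp [hru], rfl⟩, hle⟩
      · rintro ⟨hk, hle⟩
        obtain ⟨u, hu, rfl⟩ := mem_image.mp hk
        simp only [mem_filter, mem_univ, true_and] at hu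
        obtain ⟨u', hu', hku'⟩ := m_exists (G := G) u
        have hmu' : mfun G u' = mfun G u := (m_congr hP hu').symm
        exact ⟨u', ⟨hu.trans hu'.reachable, by rw [hku', hmu'], by rw [hmu']; exact hle⟩,
          hmu'⟩
    rw [himg]
    have : (compD G v).filter (· ≤ mfun G v)
        = insert (mfun G v) ((compD G v).filter (· < mfun G v)) := by
      ext k
      simp only [mem_filter, mem_insert]
      constructor
      · rintro ⟨hk, hle⟩
        rcases lt_or_eq_of_le hle with h | h
        · exact Or.inr ⟨hk, h⟩
        · exact Or.inl h
      · rintro (rfl | ⟨hk, hlt⟩)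
        · exact ⟨m_mem_compD v, le_refl _⟩
        · exact ⟨hk, le_of_lt hlt⟩
    rw [this, Finset.card_insert_of_notMem (by simp), color]

lemma color_lt_cliqueNum (hP : G.PropertyP) (v : V) : color G v < G.cliqueNum := by
  obtain ⟨s, hs, hcard⟩ := exists_clique hP v
  have : s.card ≤ G.cliqueNum := by
    apply le_csSup
    · exact ⟨Fintype.card V, fun n ⟨t, ht⟩ => ht.2 ▸ Finset.card_le_card t.subset_univ⟩
    · exact ⟨s, hs, rfl⟩
  omega

lemma color_lt_color (hP : G.PropertyP) {v w : V} (hadj : G.Adj v w)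
    (hm : mfun G v < mfun G w) : color G v < color G w := by
  classical
  have hD : compD G v = compD G w := compD_congr hadj.reachable
  unfold color
  rw [← hD]
  apply Finset.card_lt_card
  constructor
  · intro k hk
    simp only [mem_filter] at hk ⊢
    exact ⟨hk.1, hk.2.trans hm⟩
  · intro hsub
    have : mfun G v ∈ (compD G v).filter (· < mfun G v) :=
      hsub (by simp [m_mem_compD v, hm])
    simp at this

lemma color_ne_of_adj (hP : G.PropertyP) {v w : V} (hadj : G.Adj v w) :
    color G v ≠ color G w := by
  have hm : mfun G v ≠ mfun G w := by
    intro h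
    rcases rel_of_m_eq hP h with rfl | ⟨hn, _⟩
    · exact G.loopless.irrefl v hadj
    · exact hn hadj
  rcases lt_trichotomy (mfun G v) (mfun G w) with h | h | h
  · exact Nat.ne_of_lt (color_lt_color hP hadj h)
  · exact absurd h hm
  · exact Nat.ne_of_gt (color_lt_color hP hadj.symm h)

theorem chromaticNumber_eq (hP : G.PropertyP) :
    G.chromaticNumber = (G.cliqueNum : ℕ∞) := by
  apply le_antisymm
  · have hc : G.Colorable G.cliqueNum := by
      refine ⟨SimpleGraph.Coloring.mk
        (fun v => ⟨color G v, color_lt_cliqueNum hP v⟩) ?_⟩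
      intro v w hadj h
      exact color_ne_of_adj hP hadj (congrArg Fin.val h)
    exact hc.chromaticNumber_le
  · obtain ⟨s, hs⟩ := G.exists_isNClique_cliqueNum
    have := hs.1.card_le_chromaticNumber
    rwa [hs.2] at this

end PropP

/-- Every finite simple graph satisfying property `P` is perfect. -/
theorem isPerfect_of_propertyP {V : Type} [Fintype V] (G : SimpleGraph V)
    (hP : G.PropertyP) : G.IsPerfect := by
  intro S
  haveI : Fintype ↥S := Fintype.ofFinite ↥S
  have hP' : (G.induce S).PropertyP := by
    intro v1 w1 v2 w2 h1 h2 hn1 hn2 hn3 hn4 h3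
    simp only [SimpleGraph.comap_adj, Function.Embedding.coe_subtype] at h1 h2 h3 ⊢
    exact hP h1 h2 (fun h => hn1 (Subtype.ext h)) (fun h => hn2 (Subtype.ext h))
      (fun h => hn3 (Subtype.ext h)) (fun h => hn4 (Subtype.ext h)) h3
  have hnum : (G.induce S).cliqueNumber = (G.induce S).cliqueNum := rfl
  rw [hnum]
  exact PropP.chromaticNumber_eq hP'
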